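/- Let N ≥ 1, ε̂ ∈ (0, 1), and set k = ⌈(N + 1)(1 − ε̂)⌉, assuming k ≤ N. Let δ₁, …, δ_N, δ_{N+1} be independent, identically distributed real-valued random variables on a probability space (Ω, ℙ), and for each ω let Δ(ω) be the k-th smallest value among δ₁(ω), …, δ_N(ω) (i.e., the k-th entry of the nondecreasing rearrangement of these N values). Then ℙ({ω : δ_{N+1}(ω) ≤ Δ(ω)}) ≥ 1 − ε̂. -/

import Mathlib

open MeasureTheory ProbabilityTheory

/-- The `k`-th smallest value (k-th order statistic, 1-indexed) among
`x 0, …, x (N-1)`: the `k`-th entry of a nondecreasing rearrangement. -/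
noncomputable def kthSmallest {N : ℕ} (x : Fin N → ℝ) (k : ℕ) : ℝ :=
  ((List.ofFn x).mergeSort (· ≤ ·)).getD (k - 1) 0

open scoped ENNReal NNReal

open Finset in
lemma count_low_ge {n k : ℕ} (hk : k ≤ n) (x : Fin n → ℝ) :
    k ≤ #(univ.filter fun j => #(univ.filter fun i => x i < x j) < k) := by
  classical
  set g := Tuple.sort x with hg
  have hmono := Tuple.monotone_sort x
  have hsub : (univ.filter fun p : Fin n => (p : ℕ) < k).image g
      ⊆ univ.filter fun j => #(univ.filter fun i => x i < x j) < k := by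
    intro j hj
    simp only [mem_image, mem_filter, mem_univ, true_and] at hj ⊢
    obtain ⟨p, hp, rfl⟩ := hj
    have hsub2 : (univ.filter fun i => x i < x (g p)) ⊆
        (univ.filter fun q : Fin n => q < p).image g := by
      intro i hi
      simp only [mem_filter, mem_univ, true_and] at hi
      simp only [mem_image, mem_filter, mem_univ, true_and]
      refine ⟨g.symm i, ?_, by simp⟩
      by_contra hle
      push_neg at hle
      have := hmono hle
      simp only [Function.comp] at this
      rw [Equiv.apply_symm_apply] at this
      exact absurd hi (not_lt.2 (by simpa using this))
    calc #(univ.filter fun i => x i < x (g p))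
        ≤ #((univ.filter fun q : Fin n => q < p).image g) := card_le_card hsub2
      _ ≤ #(univ.filter fun q : Fin n => q < p) := card_image_le
      _ = (p : ℕ) := by
          rw [show (univ.filter fun q : Fin n => q < p) = Finset.Iio p by
            ext q; simp [Finset.mem_Iio]]
          exact Fin.card_Iio p
      _ < k := hp
  calc k = #(univ.filter fun p : Fin n => (p : ℕ) < k) := by
        rw [show (univ.filter fun p : Fin n => (p:ℕ) < k)
            = (univ : Finset (Fin k)).image (Fin.castLE hk) from ?_]
        · rw [card_image_of_injective _ (Fin.castLE_injective hk)]; simp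
        · ext p
          simp only [mem_filter, mem_univ, true_and, mem_image]
          constructor
          · intro hp; exact ⟨⟨p, hp⟩, rfl⟩
          · rintro ⟨q, rfl⟩; exact q.isLt
    _ = #((univ.filter fun p : Fin n => (p : ℕ) < k).image g) :=
        (card_image_of_injective _ g.injective).symm
    _ ≤ _ := card_le_card hsub

lemma sorted_count_iff {l : List ℝ} (hs : l.Pairwise (· ≤ ·)) {m : ℕ} (hm : m < l.length)
    (t : ℝ) : t ≤ l.getD m 0 ↔ l.countP (fun a => decide (a < t)) ≤ m := by
  constructor
  · intro ht
    have hsplit : l = l.take m ++ l.drop m := (List.take_append_drop m l).symm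
    rw [hsplit, List.countP_append]
    have h1 : (l.take m).countP (fun a => decide (a < t)) ≤ m :=
      le_trans List.countP_le_length (by simp)
    have h2 : (l.drop m).countP (fun a => decide (a < t)) = 0 := by
      rw [List.countP_eq_zero]
      intro a ha
      obtain ⟨j, hj, hja⟩ := List.getElem_of_mem ha
      rw [List.getElem_drop] at hja
      subst hja
      simp only [decide_eq_true_eq, not_lt]
      have hgd : l.getD m 0 = l[m] := List.getD_eq_getElem l 0 hm
      refine le_trans (hgd ▸ ht) ?_
      rcases Nat.eq_zero_or_pos j with rfl | hj0
      · simp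
      · have hlen : m + j < l.length := by
          rw [List.length_drop] at hj; omega
        have := hs.rel_get_of_lt (a := ⟨m, hm⟩) (b := ⟨m + j, hlen⟩)
          (by simp [Fin.mk_lt_mk]; omega)
        simpa using this
    omega
  · intro hc
    by_contra hlt
    push_neg at hlt
    have hgd : l.getD m 0 = l[m] := List.getD_eq_getElem l 0 hm
    rw [hgd] at hlt
    have hall : ∀ a ∈ l.take (m+1), decide (a < t) = true := by
      intro a ha
      obtain ⟨j, hj, rfl⟩ := List.getElem_of_mem ha |>.imp fun j h => h
      rw [List.getElem_take] at *
      simp only [decide_eq_true_eq]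
      have hjm : j ≤ m := by
        have := hj; rw [List.length_take] at this; omega
      calc l[j] ≤ l[m] := by
            rcases eq_or_lt_of_le hjm with rfl | h
            · exact le_rfl
            · have := hs.rel_get_of_lt (a := ⟨j, by omega⟩) (b := ⟨m, hm⟩)
                (by simp [Fin.mk_lt_mk]; omega)
              simpa using this
        _ < t := hlt
    have : m + 1 ≤ l.countP (fun a => decide (a < t)) := by
      have h1 : (l.take (m+1)).countP (fun a => decide (a < t)) = m + 1 := by
        rw [List.countP_eq_length.2 hall, List.length_take]; omega
      calc m + 1 = (l.take (m+1)).countP (fun a => decide (a < t)) := h1.symm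
        _ ≤ l.countP (fun a => decide (a < t)) := by
            conv_rhs => rw [← List.take_append_drop (m+1) l]
            rw [List.countP_append]; omega
    omega

lemma countP_eq_sum_map {α : Type*} (q : α → Bool) (li : List α) :
    li.countP q = (li.map fun a => if q a = true then 1 else 0).sum := by
  induction li with
  | nil => simp
  | cons a li ih => by_cases h : q a = true <;> simp [List.countP_cons, ih, h, Nat.add_comm]

open Finset in
lemma le_kthSmallest_iff {N k : ℕ} (hk1 : 1 ≤ k) (hkN : k ≤ N) (y : Fin N → ℝ) (t : ℝ) :
    (t ≤ kthSmallest y k ↔ #(univ.filter fun i => y i < t) < k) := by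
  classical
  set l := (List.ofFn y).mergeSort (· ≤ ·) with hl
  have hperm : l.Perm (List.ofFn y) := List.mergeSort_perm _ _
  have hsort : l.Pairwise (· ≤ ·) := List.pairwise_mergeSort' _ _
  have hlen : l.length = N := by rw [hperm.length_eq, List.length_ofFn]
  have hm : k - 1 < l.length := by omega
  have hcount : l.countP (fun a => decide (a < t)) = #(univ.filter fun i => y i < t) := by
    rw [hperm.countP_eq, List.ofFn_eq_map, List.countP_map,
      countP_eq_sum_map, Finset.card_filter, Fin.sum_univ_def]
    simp [Function.comp]
  rw [kthSmallest, ← hl, sorted_count_iff hsort hm t, hcount]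
  omega

open Finset in
lemma count_castSucc_eq {N : ℕ} (x : Fin (N + 1) → ℝ) :
    #(univ.filter fun i : Fin N => x i.castSucc < x (Fin.last N))
      = #(univ.filter fun i : Fin (N + 1) => x i < x (Fin.last N)) := by
  classical
  have huniv : (univ : Finset (Fin (N+1))) = insert (Fin.last N) (Iio (Fin.last N)) := by
    rw [Finset.Iio_insert]
    ext i; simp [Fin.le_last]
  conv_rhs => rw [huniv]
  rw [filter_insert, if_neg (by simp), Fin.Iio_last_eq_map, filter_map, card_map]
  rfl

open Finset in
/-- Marginal split-conformal coverage guarantee (eq. (14) of the paper):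
a fresh i.i.d. nonconformity score `δ (Fin.last N)` is bounded by the
`⌈(N+1)(1-ε̂)⌉`-th smallest of the `N` calibration scores with probability at
least `1 - ε̂`. -/
theorem split_conformal_coverage
    {Ω : Type*} [MeasurableSpace Ω] (μ : Measure Ω) [IsProbabilityMeasure μ]
    (N : ℕ) (hN : 1 ≤ N) (εhat : ℝ) (hε0 : 0 < εhat) (hε1 : εhat < 1)
    (k : ℕ) (hk : k = ⌈(N + 1 : ℝ) * (1 - εhat)⌉₊) (hkN : k ≤ N)
    (δ : Fin (N + 1) → Ω → ℝ)
    (hmeas : ∀ i, Measurable (δ i))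
    (hindep : iIndepFun δ μ)
    (hident : ∀ i j, IdentDistrib (δ i) (δ j) μ μ) :
    μ {ω | δ (Fin.last N) ω ≤ kthSmallest (fun i : Fin N => δ i.castSucc ω) k}
      ≥ ENNReal.ofReal (1 - εhat) := by
  classical
  have hk1 : 1 ≤ k := by
    rw [hk]
    exact Nat.one_le_iff_ne_zero.2 (by
      have : (0:ℝ) < (N + 1 : ℝ) * (1 - εhat) := by nlinarith
      simpa [Nat.pos_iff_ne_zero] using Nat.ceil_pos.2 this)
  -- the joint law is a product of identical marginals
  set m₀ : Measure ℝ := μ.map (δ 0) with hm₀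
  haveI : IsProbabilityMeasure m₀ := Measure.isProbabilityMeasure_map (hmeas 0).aemeasurable
  set V : Ω → (Fin (N + 1) → ℝ) := fun ω i => δ i ω with hV
  have hVmeas : Measurable V := measurable_pi_lambda _ fun i => hmeas i
  set P : Measure (Fin (N + 1) → ℝ) := Measure.pi (fun _ => m₀) with hP
  have hmapV : μ.map V = P := by
    rw [hP]
    refine (Measure.pi_eq fun s hs => ?_).symm
    rw [Measure.map_apply hVmeas (MeasurableSet.univ_pi hs)]
    have hpre : V ⁻¹' (Set.univ.pi s) = ⋂ i ∈ Finset.univ, δ i ⁻¹' s i := by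
      ext ω; simp [hV, Set.mem_pi]
    rw [hpre, hindep.measure_inter_preimage_eq_mul Finset.univ (fun i _ => hs i)]
    refine Finset.prod_congr rfl fun i _ => ?_
    rw [hm₀, ← (hident i 0).map_eq, Measure.map_apply (hmeas i) (hs i)]
  -- the events
  set g : (Fin (N + 1) → ℝ) → Fin (N + 1) → ℕ :=
    fun v j => #(univ.filter fun i => v i < v j) with hgdef
  have hgmeas : ∀ j, Measurable fun v => g v j := by
    intro j
    have : (fun v => g v j) = fun v => ∑ i, if v i < v j then 1 else 0 := by
      funext v; rw [hgdef]; exact Finset.card_filter _ _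
    rw [this]
    exact Finset.measurable_sum _ fun i _ =>
      Measurable.ite (measurableSet_lt (measurable_pi_apply i) (measurable_pi_apply j))
        measurable_const measurable_const
  set S : Fin (N + 1) → Set (Fin (N + 1) → ℝ) := fun j => {v | g v j < k} with hSdef
  have hSmeas : ∀ j, MeasurableSet (S j) := fun j =>
    (hgmeas j) (measurableSet_lt measurable_id measurable_const)
  -- exchangeability: all S j have the same probability
  have hPSeq : ∀ j, P (S j) = P (S (Fin.last N)) := by
    intro j
    set σ : Equiv.Perm (Fin (N + 1)) := Equiv.swap j (Fin.last N) with hσ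
    have hmp : MeasurePreserving (MeasurableEquiv.piCongrLeft (fun _ => ℝ) σ) P P :=
      MeasureTheory.measurePreserving_piCongrLeft (fun _ => m₀) σ
    have happ : ∀ v : Fin (N + 1) → ℝ,
        (MeasurableEquiv.piCongrLeft (fun _ => ℝ) σ) v = v ∘ σ.symm := by
      intro v; funext i
      simp [MeasurableEquiv.coe_piCongrLeft, Equiv.piCongrLeft_apply_eq_cast]
    have hgcomp : ∀ (v : Fin (N+1) → ℝ) (j' : Fin (N+1)),
        g (v ∘ σ.symm) j' = g v (σ.symm j') := by
      intro v j'
      rw [hgdef]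
      refine Finset.card_bij (fun i _ => σ.symm i) (fun i hi => ?_) ?_ ?_
      · simp only [mem_filter, mem_univ, true_and, Function.comp] at hi ⊢; exact hi
      · intro a _ b _ hab; exact σ.symm.injective hab
      · intro b hb
        refine ⟨σ b, ?_, by simp⟩
        simp only [mem_filter, mem_univ, true_and, Function.comp] at hb ⊢
        simpa using hb
    have hpre : (MeasurableEquiv.piCongrLeft (fun _ => ℝ) σ) ⁻¹' (S j) = S (Fin.last N) := by
      ext v
      simp only [Set.mem_preimage, hSdef, Set.mem_setOf_eq, happ, hgcomp]
      rw [show σ.symm j = Fin.last N by simp [hσ]]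
    calc P (S j) = P ((MeasurableEquiv.piCongrLeft (fun _ => ℝ) σ) ⁻¹' (S j)) :=
          (hmp.measure_preimage (hSmeas j).nullMeasurableSet).symm
      _ = P (S (Fin.last N)) := by rw [hpre]
  -- counting bound: sum of probabilities ≥ k
  have hsum : (k : ℝ≥0∞) ≤ ∑ j, P (S j) := by
    have hpt : ∀ v : Fin (N + 1) → ℝ,
        (k : ℝ≥0∞) ≤ ∑ j, (S j).indicator (fun _ => (1:ℝ≥0∞)) v := by
      intro v
      have hcard := count_low_ge (le_trans hkN (Nat.le_succ N)) v
      have : ∑ j, (S j).indicator (fun _ => (1:ℝ≥0∞)) v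
          = (#(univ.filter fun j => g v j < k) : ℝ≥0∞) := by
        rw [Finset.card_filter]
        push_cast
        refine Finset.sum_congr rfl fun j _ => ?_
        by_cases h : g v j < k <;> simp [Set.indicator, hSdef, h]
      rw [this]
      exact_mod_cast hcard
    calc (k : ℝ≥0∞) = ∫⁻ _, (k : ℝ≥0∞) ∂P := by simp
      _ ≤ ∫⁻ v, ∑ j, (S j).indicator (fun _ => (1:ℝ≥0∞)) v ∂P := lintegral_mono hpt
      _ = ∑ j, ∫⁻ v, (S j).indicator (fun _ => (1:ℝ≥0∞)) v ∂P :=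
          lintegral_finset_sum _ fun j _ => measurable_const.indicator (hSmeas j)
      _ = ∑ j, P (S j) := by
          exact Finset.sum_congr rfl fun j _ => lintegral_indicator_one (hSmeas j)
  have hNP : (k : ℝ≥0∞) ≤ (N + 1 : ℝ≥0∞) * P (S (Fin.last N)) := by
    calc (k : ℝ≥0∞) ≤ ∑ j, P (S j) := hsum
      _ = ∑ _j : Fin (N + 1), P (S (Fin.last N)) := Finset.sum_congr rfl fun j _ => hPSeq j
      _ = (N + 1 : ℝ≥0∞) * P (S (Fin.last N)) := by
          rw [Finset.sum_const, Finset.card_univ, Fintype.card_fin, nsmul_eq_mul]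
          push_cast; ring_nf
  -- identify the target event
  have hevent : {ω | δ (Fin.last N) ω ≤ kthSmallest (fun i : Fin N => δ i.castSucc ω) k}
      = V ⁻¹' (S (Fin.last N)) := by
    ext ω
    simp only [Set.mem_setOf_eq, Set.mem_preimage, hSdef, hgdef, hV]
    rw [le_kthSmallest_iff hk1 hkN (fun i : Fin N => δ i.castSucc ω) (δ (Fin.last N) ω),
      count_castSucc_eq (fun i => δ i ω)]
  rw [hevent, ← Measure.map_apply hVmeas (hSmeas _), hmapV]
  -- final arithmetic
  have hkreal : ENNReal.ofReal ((N + 1 : ℝ) * (1 - εhat)) ≤ (k : ℝ≥0∞) := by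
    rw [hk, ← ENNReal.ofReal_natCast]
    exact ENNReal.ofReal_le_ofReal (Nat.le_ceil _)
  have hmul : (N + 1 : ℝ≥0∞) * ENNReal.ofReal (1 - εhat)
      ≤ (N + 1 : ℝ≥0∞) * P (S (Fin.last N)) := by
    refine le_trans ?_ hNP
    refine le_trans (le_of_eq ?_) hkreal
    rw [ENNReal.ofReal_mul (by positivity)]
    congr 1
    rw [ENNReal.ofReal_add (by positivity) zero_le_one, ENNReal.ofReal_natCast,
      ENNReal.ofReal_one]
  have hne : (N + 1 : ℝ≥0∞) ≠ 0 := by simp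
  have hnetop : (N + 1 : ℝ≥0∞) ≠ ⊤ := by
    refine ENNReal.add_ne_top.2 ⟨ENNReal.natCast_ne_top N, ENNReal.one_ne_top⟩
  exact (ENNReal.mul_le_mul_iff_right hne hnetop).1 hmul
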